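/- (Dehn–Sommerville relations for balanced simplicial complexes, h-version.) Let Δ be a balanced simplicial complex of type a = (a_1, …, a_m) with flag h-numbers (h_b)_{b ≤ a}, and let d = |a|. Then for every b ∈ ℕ^m with b ≤ a: h_b − h_{a−b} = (−1)^{|a|−|b|} · ∑_{F ∈ Δ, b(F) ≤ b} (∏_{j=1}^m binomial(a_j − b(F)_j, a_j − b_j)) · ε_F, where ε_F = (−1)^{d−1−|F|}(m_F − 1). -/

import Mathlib

open Finset MvPolynomial

/-- A (finite, abstract) simplicial complex: a finite collection of finite subsets of `V`
containing the empty set and closed under taking subsets. -/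
def IsSimplicialComplex {V : Type*} [DecidableEq V] (Δ : Finset (Finset V)) : Prop :=
  ∅ ∈ Δ ∧ ∀ F ∈ Δ, ∀ G ⊆ F, G ∈ Δ

/-- `Δ` has dimension `d - 1`: every face has at most `d` elements and some face has
exactly `d` elements. -/
def HasDimension {V : Type*} [DecidableEq V] (Δ : Finset (Finset V)) (d : ℕ) : Prop :=
  (∀ F ∈ Δ, F.card ≤ d) ∧ ∃ F ∈ Δ, F.card = d

/-- `fnum Δ i` is the number of faces of `Δ` with exactly `i` elements, i.e. `f_{i-1}`. -/
def fnum {V : Type*} [DecidableEq V] (Δ : Finset (Finset V)) (i : ℕ) : ℕ :=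
  (Δ.filter fun F => F.card = i).card

/-- The multiplicity `m_F = ∑_{G ∈ Δ, F ⊆ G} (−1)^{d−|G|}` of a face `F` of a complex of
dimension `d − 1` (all faces `G` satisfy `|G| ≤ d`, so `d - G.card` is the usual subtraction). -/
def mult {V : Type*} [DecidableEq V] (Δ : Finset (Finset V)) (d : ℕ) (F : Finset V) : ℤ :=
  ∑ G ∈ Δ.filter (fun G => F ⊆ G), (-1 : ℤ) ^ (d - G.card)

/-- The reduced Euler characteristic `χ̃(Γ) = ∑_{G ∈ Γ} (−1)^{|G|−1}`; the exponent is
written `|G| + 1`, which has the same parity as `|G| − 1` (the empty face contributes `−1`). -/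
def chiTilde {V : Type*} [DecidableEq V] (Γ : Finset (Finset V)) : ℤ :=
  ∑ G ∈ Γ, (-1 : ℤ) ^ (G.card + 1)

/-- The link of a face `F` in `Δ`. -/
def link {V : Type*} [DecidableEq V] (Δ : Finset (Finset V)) (F : Finset V) :
    Finset (Finset V) :=
  Δ.filter fun G => G ∩ F = ∅ ∧ G ∪ F ∈ Δ

/-- `Δ` (of dimension `d − 1`) is reciprocal if `m_F ∈ {0, 1}` for every nonempty face. -/
def IsReciprocal {V : Type*} [DecidableEq V] (Δ : Finset (Finset V)) (d : ℕ) : Prop :=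
  ∀ F ∈ Δ, F ≠ ∅ → mult Δ d F = 0 ∨ mult Δ d F = 1

/-- `Δ` (of dimension `d − 1`) is semi-Eulerian if `m_F = 1` for every nonempty face. -/
def IsSemiEulerian {V : Type*} [DecidableEq V] (Δ : Finset (Finset V)) (d : ℕ) : Prop :=
  ∀ F ∈ Δ, F ≠ ∅ → mult Δ d F = 1

/-- `fint Δ d i` is the number of interior faces (nonempty faces with `m_F = 1`) of `Δ`
with exactly `i` elements, i.e. `f^int_{i-1}`. -/
def fint {V : Type*} [DecidableEq V] (Δ : Finset (Finset V)) (d : ℕ) (i : ℕ) : ℕ :=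
  (Δ.filter fun F => F.card = i ∧ F ≠ ∅ ∧ mult Δ d F = 1).card

/-- `bvec κ F j` is the number of vertices of `F` with color `j`. -/
def bvec {V : Type*} [DecidableEq V] {m : ℕ} (κ : V → Fin m) (F : Finset V) (j : Fin m) : ℕ :=
  (F.filter fun v => κ v = j).card

/-- `Δ` is balanced of type `a` with respect to the coloring `κ`: every face of `Δ` that is
maximal under inclusion has exactly `a j` vertices of color `j`, for each color `j`. -/
def IsBalanced {V : Type*} [DecidableEq V] {m : ℕ} (Δ : Finset (Finset V))
    (κ : V → Fin m) (a : Fin m → ℕ) : Prop :=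
  ∀ F ∈ Δ, (∀ G ∈ Δ, F ⊆ G → G = F) → ∀ j, bvec κ F j = a j

section DSAux

open Finset MvPolynomial

lemma npp {x y : ℕ} (h : x % 2 = y % 2) : (-1:ℤ)^x = (-1)^y := by
  rw [← Nat.div_add_mod x 2, ← Nat.div_add_mod y 2, h, pow_add, pow_add, pow_mul, pow_mul]
  norm_num

lemma lemA' (a b g : ℕ) (hga : g ≤ a) :
    ∑ k ∈ Finset.range (g+1), (g.choose k : ℤ) * (-1:ℤ)^k *
      (if k ≤ b then ((a-k).choose (b-k) : ℤ) else 0)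
      = ((a-g).choose b : ℤ) := by
  classical
  have key : ∑ k ∈ Finset.range (g+1),
      (Polynomial.C ((g.choose k : ℤ) * (-1:ℤ)^k)) *
        ((1+Polynomial.X)^(a-k) * Polynomial.X^k)
      = (1+Polynomial.X : Polynomial ℤ)^(a-g) := by
    have h1 : ((-Polynomial.X) + (1+Polynomial.X) : Polynomial ℤ)^g = 1 := by
      have : ((-Polynomial.X) + (1+Polynomial.X) : Polynomial ℤ) = 1 := by ring
      rw [this, one_pow]
    have h2 := congrArg (· * ((1+Polynomial.X : Polynomial ℤ)^(a-g)))
      (add_pow (-Polynomial.X : Polynomial ℤ) (1+Polynomial.X) g)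
    simp only [h1, one_mul] at h2
    rw [h2, Finset.sum_mul]
    refine Finset.sum_congr rfl fun k hk => ?_
    have hk' : k ≤ g := by simpa [Nat.lt_succ_iff] using hk
    have h3 : (g - k) + (a - g) = a - k := by omega
    rw [← h3, pow_add, neg_pow (Polynomial.X : Polynomial ℤ) k]
    simp only [map_mul, map_pow, map_one, map_natCast, Polynomial.C_neg, Polynomial.C_1]
    ring
  have hco := congrArg (Polynomial.coeff · b) key
  simp only [Polynomial.finset_sum_coeff, Polynomial.coeff_one_add_X_pow] at hco
  rw [← hco]
  refine Finset.sum_congr rfl fun k hk => ?_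
  rw [mul_assoc, Polynomial.coeff_C_mul, Polynomial.coeff_mul_X_pow']
  split
  · rw [Polynomial.coeff_one_add_X_pow, mul_assoc]
  · simp

lemma lemA (a b g : ℕ) (hga : g ≤ a) :
    ∑ k ∈ Finset.range (g+1), (g.choose k : ℤ) *
      (if k ≤ b then (-1:ℤ)^(b-k) * ((a-k).choose (b-k) : ℤ) else 0)
      = (-1:ℤ)^b * ((a-g).choose b : ℤ) := by
  rw [← lemA' a b g hga, Finset.mul_sum]
  refine Finset.sum_congr rfl fun k hk => ?_
  by_cases h : k ≤ b
  · simp only [if_pos h]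
    have : (-1:ℤ)^(b-k) = (-1)^b * (-1)^k := by rw [← pow_add]; exact npp (by omega)
    rw [this]; ring
  · simp [if_neg h]

variable {V : Type*} [DecidableEq V] {m : ℕ}

lemma bvec_mono (κ : V → Fin m) {F G : Finset V} (h : F ⊆ G) (j : Fin m) :
    bvec κ F j ≤ bvec κ G j :=
  Finset.card_le_card (Finset.filter_subset_filter _ h)

lemma card_eq_sum_bvec (κ : V → Fin m) (F : Finset V) : F.card = ∑ j, bvec κ F j :=
  Finset.card_eq_sum_card_fiberwise fun v _ => Finset.mem_univ (κ v)

lemma bvec_le_a (Δ : Finset (Finset V)) (κ : V → Fin m) (a : Fin m → ℕ)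
    (hΔ : IsSimplicialComplex Δ) (hbal : IsBalanced Δ κ a) {G : Finset V} (hG : G ∈ Δ)
    (j : Fin m) : bvec κ G j ≤ a j := by
  obtain ⟨F, hF, hmax⟩ := Finset.exists_max_image (Δ.filter fun H => G ⊆ H) Finset.card
    ⟨G, Finset.mem_filter.mpr ⟨hG, Finset.Subset.refl G⟩⟩
  rw [Finset.mem_filter] at hF
  have hFmax : ∀ H ∈ Δ, F ⊆ H → H = F := by
    intro H hH hFH
    have hHs : H ∈ Δ.filter fun H => G ⊆ H := Finset.mem_filter.mpr ⟨hH, hF.2.trans hFH⟩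
    exact (Finset.eq_of_subset_of_card_le hFH (hmax H hHs)).symm
  rw [← hbal F hF.1 hFmax j]
  exact bvec_mono κ hF.2 j

lemma sum_powerset_prod (κ : V → Fin m) (G : Finset V) (f : Fin m → ℕ → ℤ) :
    ∑ F ∈ G.powerset, ∏ j, f j (bvec κ F j)
      = ∏ j, ∑ k ∈ Finset.range (bvec κ G j + 1), ((bvec κ G j).choose k : ℤ) * f j k := by
  have step1 : ∀ j : Fin m, ∑ k ∈ Finset.range (bvec κ G j + 1),
        ((bvec κ G j).choose k : ℤ) * f j k
      = ∑ S ∈ (G.filter fun v => κ v = j).powerset, f j S.card := by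
    intro j
    rw [show bvec κ G j = (G.filter fun v => κ v = j).card from rfl,
      Finset.sum_powerset_apply_card]
    exact Finset.sum_congr rfl fun k _ => nsmul_eq_mul _ _
  simp only [step1]
  rw [Finset.prod_univ_sum]
  refine Finset.sum_nbij' (fun F => fun j => F.filter fun v => κ v = j)
    (fun t => Finset.univ.biUnion t) ?_ ?_ ?_ ?_ ?_
  · intro F hF
    rw [Fintype.mem_piFinset]
    intro j
    rw [Finset.mem_powerset]
    exact Finset.filter_subset_filter _ (Finset.mem_powerset.mp hF)
  · intro t ht
    rw [Fintype.mem_piFinset] at ht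
    rw [Finset.mem_powerset]
    refine Finset.biUnion_subset.mpr fun j _ => ?_
    exact (Finset.mem_powerset.mp (ht j)).trans (Finset.filter_subset _ _)
  · intro F hF
    ext v
    simp only [Finset.mem_biUnion, Finset.mem_filter, Finset.mem_univ, true_and]
    exact ⟨fun ⟨j, hv, _⟩ => hv, fun hv => ⟨κ v, hv, rfl⟩⟩
  · intro t ht
    rw [Fintype.mem_piFinset] at ht
    funext j
    ext v
    simp only [Finset.mem_filter, Finset.mem_biUnion, Finset.mem_univ, true_and]
    constructor
    · rintro ⟨⟨j', hj'⟩, hv⟩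
      have hmem := Finset.mem_powerset.mp (ht j') hj'
      rw [Finset.mem_filter] at hmem
      have : j' = j := by rw [← hmem.2, hv]
      rwa [← this]
    · intro hv
      have hmem := Finset.mem_powerset.mp (ht j) hv
      rw [Finset.mem_filter] at hmem
      exact ⟨⟨j, hv⟩, hmem.2⟩
  · intro F hF
    rfl

lemma mon_eq (c : Fin m → ℕ) :
    (∏ j, (X j : MvPolynomial (Fin m) ℤ) ^ c j)
      = monomial (Finsupp.equivFunOnFinite.symm c) 1 := by
  rw [← prod_X_pow_eq_monomial]
  refine (Finset.prod_subset (Finset.subset_univ _) fun j _ hj => ?_).symm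
  have : c j = 0 := by
    by_contra h
    exact hj (Finsupp.mem_support_iff.mpr h)
  rw [this, pow_zero]

lemma oneSubXpow (j : Fin m) (n : ℕ) :
    ((1 - X j : MvPolynomial (Fin m) ℤ))^n
      = ∑ k ∈ Finset.range (n+1), C ((-1:ℤ)^k * n.choose k) * X j ^ k := by
  have : (1 - X j : MvPolynomial (Fin m) ℤ) = (-X j) + 1 := by ring
  rw [this, add_pow]
  refine Finset.sum_congr rfl fun k _ => ?_
  rw [one_pow, mul_one, neg_pow]
  simp only [map_mul, map_pow, map_one, map_natCast, map_neg, C_1]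
  ring

lemma coeff_face (e n c : Fin m → ℕ) :
    coeff (Finsupp.equivFunOnFinite.symm c)
      ((∏ j, (X j : MvPolynomial (Fin m) ℤ) ^ e j) * ∏ j, (1 - X j) ^ n j)
    = if (∀ j, e j ≤ c j ∧ c j ≤ e j + n j) then
        ∏ j, ((-1:ℤ)^(c j - e j) * ((n j).choose (c j - e j) : ℤ)) else 0 := by
  simp only [oneSubXpow]
  rw [← Finset.prod_mul_distrib]
  have hfac : ∀ j : Fin m, (X j : MvPolynomial (Fin m) ℤ) ^ e j *
      (∑ k ∈ Finset.range (n j + 1), C ((-1:ℤ)^k * (n j).choose k) * X j ^ k)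
      = ∑ k ∈ Finset.range (n j + 1), C ((-1:ℤ)^k * (n j).choose k) * X j ^ (e j + k) := by
    intro j
    rw [Finset.mul_sum]
    exact Finset.sum_congr rfl fun k _ => by rw [pow_add]; ring
  simp only [hfac]
  rw [Finset.prod_univ_sum]
  have hterm : ∀ t : Fin m → ℕ,
      (∏ j, C ((-1:ℤ)^(t j) * ((n j).choose (t j) : ℤ)) * X j ^ (e j + t j))
      = monomial (Finsupp.equivFunOnFinite.symm (fun j => e j + t j))
          (∏ j, ((-1:ℤ)^(t j) * ((n j).choose (t j) : ℤ))) := by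
    intro t
    rw [Finset.prod_mul_distrib, ← map_prod, mon_eq, C_mul_monomial, mul_one]
  simp only [hterm]
  rw [MvPolynomial.coeff_sum]
  simp only [coeff_monomial]
  by_cases h : ∀ j, e j ≤ c j ∧ c j ≤ e j + n j
  · rw [if_pos h]
    rw [Finset.sum_eq_single (fun j => c j - e j)]
    · rw [if_pos (by
        apply congrArg
        funext j
        have := h j
        simp only []
        omega)]
    · intro t ht hne
      rw [if_neg]
      intro heq
      apply hne
      have h1 := Finsupp.equivFunOnFinite.symm.injective heq
      funext j
      have h2 := congrFun h1 j
      have := h j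
      omega
    · intro habs
      exfalso
      apply habs
      rw [Fintype.mem_piFinset]
      intro j
      rw [Finset.mem_range]
      have := h j
      omega
  · rw [if_neg h]
    refine Finset.sum_eq_zero fun t ht => ?_
    rw [Fintype.mem_piFinset] at ht
    rw [if_neg]
    intro heq
    apply h
    have h1 := Finsupp.equivFunOnFinite.symm.injective heq
    intro j
    have h2 := congrFun h1 j
    have h3 := ht j
    rw [Finset.mem_range] at h3
    omega

lemma coeff_Iic (a : Fin m → ℕ) (h : (Fin m → ℕ) → ℤ) (b : Fin m → ℕ) (hb : b ≤ a) :
    coeff (Finsupp.equivFunOnFinite.symm b)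
      (∑ c ∈ Finset.Iic a, C (h c) * ∏ j, X j ^ c j : MvPolynomial (Fin m) ℤ) = h b := by
  rw [MvPolynomial.coeff_sum]
  have hmon : ∀ c : Fin m → ℕ, C (h c) * (∏ j, (X j : MvPolynomial (Fin m) ℤ) ^ c j)
      = monomial (Finsupp.equivFunOnFinite.symm c) (h c) := fun c => by
    rw [mon_eq, C_mul_monomial, mul_one]
  simp only [hmon, coeff_monomial]
  rw [Finset.sum_eq_single b]
  · rw [if_pos rfl]
  · intro c hc hne
    exact if_neg fun heq => hne (Finsupp.equivFunOnFinite.symm.injective heq)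
  · intro hb'
    exact absurd (Finset.mem_Iic.mpr hb) hb'

end DSAux


/-- Dehn–Sommerville relations for balanced simplicial complexes, h-version: for `b ≤ a`,
`h_b − h_{a−b} = (−1)^{|a|−|b|} ∑_{F ∈ Δ, b(F) ≤ b} (∏_j C(a_j − b(F)_j, a_j − b_j)) ε_F`,
where `ε_F = (−1)^{d−1−|F|}(m_F − 1)`; the sign exponents `∑ a + ∑ b` and `d + 1 + |F|`
have the same parities as `|a| − |b|` and `d − 1 − |F|` respectively. -/
theorem flag_DS_balanced {V : Type*} [DecidableEq V] (Δ : Finset (Finset V)) {m : ℕ}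
    (hm : 1 ≤ m) (κ : V → Fin m) (a : Fin m → ℕ) (d : ℕ) (hd : d = ∑ j, a j) (hd1 : 1 ≤ d)
    (hΔ : IsSimplicialComplex Δ) (hbal : IsBalanced Δ κ a)
    (h : (Fin m → ℕ) → ℤ)
    (hh : (∑ b ∈ Finset.Iic a, C (h b) * ∏ j, X j ^ b j : MvPolynomial (Fin m) ℤ)
        = ∑ F ∈ Δ, (∏ j, X j ^ bvec κ F j) * ∏ j, (1 - X j) ^ (a j - bvec κ F j)) :
    ∀ b : Fin m → ℕ, b ≤ a →
      h b - h (a - b)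
        = (-1 : ℤ) ^ (∑ j, a j + ∑ j, b j)
            * ∑ F ∈ Δ.filter (fun F => ∀ j, bvec κ F j ≤ b j),
                (∏ j, ((a j - bvec κ F j).choose (a j - b j) : ℤ))
                  * ((-1 : ℤ) ^ (d + 1 + F.card) * (mult Δ d F - 1)) := by
  intro b hb
  have hfle : ∀ F ∈ Δ, ∀ j, bvec κ F j ≤ a j := fun F hF j => bvec_le_a Δ κ a hΔ hbal hF j
  have hcoeff : ∀ c : Fin m → ℕ, c ≤ a → h c
      = ∑ F ∈ Δ, (if (∀ j, bvec κ F j ≤ c j ∧ c j ≤ a j) then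
          ∏ j, ((-1:ℤ)^(c j - bvec κ F j) * ((a j - bvec κ F j).choose (c j - bvec κ F j) : ℤ))
          else 0) := by
    intro c hc
    have h1 := congrArg (MvPolynomial.coeff (Finsupp.equivFunOnFinite.symm c)) hh
    rw [coeff_Iic a h c hc] at h1
    rw [h1, MvPolynomial.coeff_sum]
    refine Finset.sum_congr rfl fun F hF => ?_
    have h2 := coeff_face (bvec κ F) (fun j => a j - bvec κ F j) c
    have h3 : ∀ j : Fin m, bvec κ F j + (a j - bvec κ F j) = a j := fun j => by
      have := hfle F hF j; omega
    simp only [h3] at h2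
    exact h2
  have hhb : h b = ∑ F ∈ Δ, (if (∀ j, bvec κ F j ≤ b j) then
      ∏ j, ((-1:ℤ)^(b j - bvec κ F j) * ((a j - bvec κ F j).choose (b j - bvec κ F j) : ℤ))
      else 0) := by
    rw [hcoeff b hb]
    refine Finset.sum_congr rfl fun F hF => ?_
    by_cases hQ : ∀ j, bvec κ F j ≤ b j
    · rw [if_pos (fun j => ⟨hQ j, hb j⟩), if_pos hQ]
    · rw [if_neg, if_neg hQ]
      intro hQ'
      exact hQ fun j => (hQ' j).1
  have hab : (a - b) ≤ a := fun j => by simp only [Pi.sub_apply]; omega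
  have hhab : h (a - b) = ∑ G ∈ Δ, (if (∀ j, bvec κ G j ≤ a j - b j) then
      ∏ j, ((-1:ℤ)^((a j - b j) - bvec κ G j) *
        ((a j - bvec κ G j).choose ((a j - b j) - bvec κ G j) : ℤ)) else 0) := by
    rw [hcoeff (a - b) hab]
    refine Finset.sum_congr rfl fun G hG => ?_
    simp only [Pi.sub_apply]
    by_cases hQ : ∀ j, bvec κ G j ≤ a j - b j
    · rw [if_pos (fun j => ⟨hQ j, by have := hfle G hG j; omega⟩), if_pos hQ]
    · rw [if_neg, if_neg hQ]
      intro hQ'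
      exact hQ fun j => (hQ' j).1
  -- KEY2 : h (a - b) equals the multiplicity-weighted sum
  have hS : h (a - b) = ∑ F ∈ Δ, (if (∀ j, bvec κ F j ≤ b j) then
      (∏ j, ((-1:ℤ)^(b j - bvec κ F j) *
        ((a j - bvec κ F j).choose (b j - bvec κ F j) : ℤ))) * mult Δ d F else 0) := by
    have step : ∀ F ∈ Δ, (if (∀ j, bvec κ F j ≤ b j) then
        (∏ j, ((-1:ℤ)^(b j - bvec κ F j) *
          ((a j - bvec κ F j).choose (b j - bvec κ F j) : ℤ))) * mult Δ d F else 0)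
        = ∑ G ∈ Δ, (if ((∀ j, bvec κ F j ≤ b j) ∧ F ⊆ G) then
            (∏ j, ((-1:ℤ)^(b j - bvec κ F j) *
              ((a j - bvec κ F j).choose (b j - bvec κ F j) : ℤ))) * (-1:ℤ)^(d - G.card)
            else 0) := by
      intro F hF
      by_cases hQ : ∀ j, bvec κ F j ≤ b j
      · rw [if_pos hQ, mult, Finset.mul_sum, Finset.sum_filter]
        refine Finset.sum_congr rfl fun G hG => ?_
        by_cases hFG : F ⊆ G
        · rw [if_pos hFG, if_pos ⟨hQ, hFG⟩]
        · rw [if_neg hFG, if_neg (fun hp => hFG hp.2)]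
      · rw [if_neg hQ]
        refine (Finset.sum_eq_zero fun G hG => ?_).symm
        rw [if_neg (fun hp => hQ hp.1)]
    rw [hhab, Finset.sum_congr rfl step, Finset.sum_comm]
    refine Finset.sum_congr rfl fun G hG => ?_
    -- the per-G inner sum
    have hpow : Δ.filter (fun F => F ⊆ G) = G.powerset := by
      ext F
      rw [Finset.mem_filter, Finset.mem_powerset]
      exact ⟨fun hx => hx.2, fun hx => ⟨hΔ.2 G hG F hx, hx⟩⟩
    have inner : ∑ F ∈ Δ, (if ((∀ j, bvec κ F j ≤ b j) ∧ F ⊆ G) then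
          (∏ j, ((-1:ℤ)^(b j - bvec κ F j) *
            ((a j - bvec κ F j).choose (b j - bvec κ F j) : ℤ))) * (-1:ℤ)^(d - G.card)
          else 0)
        = (∑ F ∈ G.powerset, ∏ j, (if bvec κ F j ≤ b j then
            (-1:ℤ)^(b j - bvec κ F j) * ((a j - bvec κ F j).choose (b j - bvec κ F j) : ℤ)
            else 0)) * (-1:ℤ)^(d - G.card) := by
      rw [Finset.sum_mul, ← hpow, Finset.sum_filter]
      refine Finset.sum_congr rfl fun F hF => ?_
      by_cases hFG : F ⊆ G
      · rw [if_pos hFG]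
        by_cases hQ : ∀ j, bvec κ F j ≤ b j
        · rw [if_pos ⟨hQ, hFG⟩]
          congr 1
          exact Finset.prod_congr rfl fun j _ => (if_pos (hQ j)).symm
        · rw [if_neg (fun hp => hQ hp.1)]
          obtain ⟨j0, hj0⟩ := not_forall.mp hQ
          have hz : (if bvec κ F j0 ≤ b j0 then (-1:ℤ)^(b j0 - bvec κ F j0) *
              (((a j0 - bvec κ F j0).choose (b j0 - bvec κ F j0)) : ℤ) else 0) = 0 :=
            if_neg hj0
          rw [Finset.prod_eq_zero (Finset.mem_univ j0) hz, zero_mul]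
      · rw [if_neg hFG, if_neg (fun hp => hFG hp.2)]
    rw [inner, sum_powerset_prod κ G
      (fun j k => if k ≤ b j then (-1:ℤ)^(b j - k) * ((a j - k).choose (b j - k) : ℤ) else 0)]
    have hlem : ∀ j : Fin m, ∑ k ∈ Finset.range (bvec κ G j + 1), ((bvec κ G j).choose k : ℤ) *
        (if k ≤ b j then (-1:ℤ)^(b j - k) * ((a j - k).choose (b j - k) : ℤ) else 0)
        = (-1:ℤ)^(b j) * ((a j - bvec κ G j).choose (b j) : ℤ) :=
      fun j => lemA (a j) (b j) (bvec κ G j) (hfle G hG j)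
    rw [Finset.prod_congr rfl fun j _ => hlem j]
    -- now compare with the h (a-b) term
    by_cases hQ : ∀ j, bvec κ G j ≤ a j - b j
    · rw [if_pos hQ]
      have hch : ∀ j : Fin m, (((a j - bvec κ G j).choose ((a j - b j) - bvec κ G j)) : ℤ)
          = ((a j - bvec κ G j).choose (b j) : ℤ) := by
        intro j
        have h1 := hQ j
        have h2 : b j ≤ a j := hb j
        have h3 := hfle G hG j
        rw [show (a j - b j) - bvec κ G j = (a j - bvec κ G j) - b j by omega,
          Nat.choose_symm (show b j ≤ a j - bvec κ G j by omega)]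
      simp only [hch]
      rw [Finset.prod_mul_distrib, Finset.prod_mul_distrib,
        Finset.prod_pow_eq_pow_sum, Finset.prod_pow_eq_pow_sum]
      have hcardG : G.card = ∑ j, bvec κ G j := card_eq_sum_bvec κ G
      have hsum1 : ∑ j, ((a j - b j) - bvec κ G j) + ∑ j, b j + ∑ j, bvec κ G j
          = ∑ j, a j := by
        rw [← Finset.sum_add_distrib, ← Finset.sum_add_distrib]
        refine Finset.sum_congr rfl fun j _ => ?_
        have h1 := hQ j
        have h2 : b j ≤ a j := hb j
        have h3 := hfle G hG j
        omega
      have hcardle : G.card ≤ d := by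
        rw [hcardG, hd]
        exact Finset.sum_le_sum fun j _ => hfle G hG j
      have hsign : (-1:ℤ)^(∑ j, ((a j - b j) - bvec κ G j))
          = (-1:ℤ)^(∑ j, b j) * (-1:ℤ)^(d - G.card) := by
        rw [← pow_add]
        exact npp (by omega)
      rw [hsign]
      ring
    · rw [if_neg hQ]
      obtain ⟨j0, hj0⟩ := not_forall.mp hQ
      have h1 : a j0 - bvec κ G j0 < b j0 := by
        have h2 : b j0 ≤ a j0 := hb j0
        have h3 := hfle G hG j0
        omega
      rw [Finset.prod_eq_zero (Finset.mem_univ j0)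
        (by rw [Nat.choose_eq_zero_of_lt h1, Nat.cast_zero, mul_zero]), zero_mul]
  -- KEY1 : rewrite the goal RHS
  have hKEY1 : (-1:ℤ)^(∑ j, a j + ∑ j, b j) * (∑ F ∈ Δ.filter (fun F => ∀ j, bvec κ F j ≤ b j),
        (∏ j, ((a j - bvec κ F j).choose (a j - b j) : ℤ))
        * ((-1:ℤ)^(d + 1 + F.card) * (mult Δ d F - 1)))
      = (∑ F ∈ Δ, (if (∀ j, bvec κ F j ≤ b j) then
          ∏ j, ((-1:ℤ)^(b j - bvec κ F j) *
            ((a j - bvec κ F j).choose (b j - bvec κ F j) : ℤ)) else 0))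
        - ∑ F ∈ Δ, (if (∀ j, bvec κ F j ≤ b j) then
            (∏ j, ((-1:ℤ)^(b j - bvec κ F j) *
              ((a j - bvec κ F j).choose (b j - bvec κ F j) : ℤ))) * mult Δ d F else 0) := by
    rw [Finset.sum_filter, Finset.mul_sum, ← Finset.sum_sub_distrib]
    refine Finset.sum_congr rfl fun F hF => ?_
    by_cases hQ : ∀ j, bvec κ F j ≤ b j
    · rw [if_pos hQ, if_pos hQ, if_pos hQ]
      have hch : ∀ j : Fin m, (((a j - bvec κ F j).choose (a j - b j)) : ℤ)
          = ((a j - bvec κ F j).choose (b j - bvec κ F j) : ℤ) := by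
        intro j
        have h1 := hQ j
        have h2 : b j ≤ a j := hb j
        rw [show a j - b j = (a j - bvec κ F j) - (b j - bvec κ F j) by omega,
          Nat.choose_symm (show b j - bvec κ F j ≤ a j - bvec κ F j by omega)]
      simp only [hch]
      rw [Finset.prod_mul_distrib, Finset.prod_pow_eq_pow_sum]
      have hcardF : F.card = ∑ j, bvec κ F j := card_eq_sum_bvec κ F
      have hsb : ∑ j, (b j - bvec κ F j) + ∑ j, bvec κ F j = ∑ j, b j := by
        rw [← Finset.sum_add_distrib]
        refine Finset.sum_congr rfl fun j _ => ?_
        have := hQ j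
        omega
      have hsign : (-1:ℤ)^(∑ j, a j + ∑ j, b j) * (-1:ℤ)^(d + 1 + F.card)
          = -(-1:ℤ)^(∑ j, (b j - bvec κ F j)) := by
        rw [← pow_add, show (-(-1:ℤ)^(∑ j, (b j - bvec κ F j)))
          = (-1:ℤ)^(∑ j, (b j - bvec κ F j) + 1) by rw [pow_succ]; ring]
        exact npp (by omega)
      linear_combination ((∏ j, ((a j - bvec κ F j).choose (b j - bvec κ F j) : ℤ))
        * (mult Δ d F - 1)) * hsign
    · rw [if_neg hQ, if_neg hQ, if_neg hQ]
      ring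
  rw [hhb, hS, ← hKEY1]
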